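/- For every odd g ≥ 1 one has the equality of ideals J_g^- = J_{g−1}^- in ℂ[α,γ]; equivalently, ζ_{g−1}^- ∈ J_g^-. -/

import Mathlib

open MvPolynomial

/-- ζ_k^- ∈ ℂ[α,γ] (variables: X 0 = α, X 1 = γ):
    ζ_{k+1}^- = α ζ_k^- + 2k(k−1) γ ζ_{k−2}^- for k even, and
    ζ_{k+1}^- = α ζ_k^- − 16k² ζ_{k−1}^- + 2k(k−1) γ ζ_{k−2}^- for k odd. -/
noncomputable def zm : ℕ → MvPolynomial (Fin 2) ℂ
  | 0 => 1
  | 1 => X 0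
  | 2 => X 0 * zm 1 - C 16 * zm 0
  | (n + 3) =>
      if n % 2 = 0 then
        X 0 * zm (n + 2) + C (2 * ((n : ℂ) + 2) * ((n : ℂ) + 1)) * X 1 * zm n
      else
        X 0 * zm (n + 2) - C (16 * ((n : ℂ) + 2) ^ 2) * zm (n + 1)
          + C (2 * ((n : ℂ) + 2) * ((n : ℂ) + 1)) * X 1 * zm n

/-- ζ_k^- for an integer index k, with ζ_k^- = 0 for k < 0. -/
noncomputable def zmZ (k : ℤ) : MvPolynomial (Fin 2) ℂ :=
  if k < 0 then 0 else zm k.toNat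

/-- J_g^- = (ζ_g^-, ζ_{g+1}^-, ζ_{g+2}^-) ⊆ ℂ[α,γ]. -/
noncomputable def Jm (g : ℕ) : Ideal (MvPolynomial (Fin 2) ℂ) :=
  Ideal.span {zm g, zm (g + 1), zm (g + 2)}

/-! ### infrastructure -/

abbrev RR := MvPolynomial (Fin 2) ℂ

def eN (i : ℕ) : ℕ := 2*(2*i+2)*(2*i+1)
def oN (i : ℕ) : ℕ := 2*(2*i+3)*(2*i+2)
def kN (i : ℕ) : ℕ := 16*(2*i+3)^2

lemma eN_pos (i : ℕ) : 0 < eN i := by unfold eN; positivity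
lemma oN_pos (i : ℕ) : 0 < oN i := by unfold oN; positivity
lemma kN_pos (i : ℕ) : 0 < kN i := by unfold kN; positivity

lemma zm0 : (zm 0 : RR) = 1 := by rw [zm]
lemma zm1 : (zm 1 : RR) = X 0 := by rw [zm]
lemma zm2 : (zm 2 : RR) = X 0 * X 0 - C 16 := by rw [zm, zm1, zm0]; ring

lemma zm_even (i : ℕ) : zm (2*i+3) =
    X 0 * zm (2*i+2) + C ((eN i : ℂ)) * X 1 * zm (2*i) := by
  rw [show 2*i+3 = (2*i)+3 by ring, zm, if_pos (by omega : (2*i) % 2 = 0),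
    show (2 * (((2*i : ℕ):ℂ) + 2) * (((2*i:ℕ):ℂ) + 1)) = ((eN i : ℕ) : ℂ) by
      unfold eN; push_cast; ring]

lemma zm_odd (i : ℕ) : zm (2*i+4) =
    X 0 * zm (2*i+3) - C ((kN i : ℂ)) * zm (2*i+2)
      + C ((oN i : ℂ)) * X 1 * zm (2*i+1) := by
  rw [show 2*i+4 = (2*i+1)+3 by ring, zm, if_neg (by omega : ¬ (2*i+1) % 2 = 0),
    show (16 * (((2*i+1 : ℕ):ℂ) + 2)^2) = ((kN i : ℕ) : ℂ) by unfold kN; push_cast; ring,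
    show (2 * (((2*i+1 : ℕ):ℂ) + 2) * (((2*i+1:ℕ):ℂ) + 1)) = ((oN i : ℕ) : ℂ) by
      unfold oN; push_cast; ring]

noncomputable def Φ : Polynomial ℝ →+* RR :=
  Polynomial.eval₂RingHom ((C : ℂ →+* RR).comp (algebraMap ℝ ℂ)) (X 0)

@[simp] lemma Φ_C (a : ℝ) : Φ (Polynomial.C a) = C (a : ℂ) := by
  simp [Φ, Complex.coe_algebraMap]

@[simp] lemma Φ_X : Φ Polynomial.X = X 0 := by simp [Φ]

noncomputable def vc (c : ℝ) : Fin 2 → ℂ := ![(c : ℂ), 0]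

lemma evalPhi (c : ℝ) (p : Polynomial ℝ) :
    eval (vc c) (Φ p) = ((p.eval c : ℝ) : ℂ) := by
  induction p using Polynomial.induction_on with
  | C a => simp
  | add p q hp hq => simp [hp, hq]
  | monomial n a h =>
    simp only [map_mul, map_pow, Φ_C, Φ_X, Polynomial.eval_mul, Polynomial.eval_C,
      Polynomial.eval_pow, Polynomial.eval_X]
    simp [vc]

lemma eval_span_zero (c d : ℝ) (hd : d^2 = c^2) (f : RR)
    (hf : f ∈ Ideal.span {(X 0)^2 - C ((c:ℂ))^2, (X 1 : RR)}) :
    eval (vc d) f = 0 := by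
  refine Submodule.span_induction ?_ ?_ ?_ ?_ hf
  · rintro x (rfl | rfl)
    · have : ((d:ℂ))^2 = ((c:ℂ))^2 := by exact_mod_cast congrArg (fun t : ℝ => (t:ℂ)) hd
      simp [vc, this]
    · simp_all [vc]
  · simp
  · intro x y _ _ hx hy; simp [hx, hy]
  · intro a x _ hx; simp [smul_eq_mul, hx]

lemma mem_span_of_eval (c : ℝ) (hc : c ≠ 0) (f : RR)
    (h1 : eval (vc c) f = 0) (h2 : eval (vc (-c)) f = 0) :
    f ∈ Ideal.span {(X 0)^2 - C ((c:ℂ))^2, (X 1 : RR)} := by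
  set I := Ideal.span {(X 0)^2 - C ((c:ℂ))^2, (X 1 : RR)} with hI
  have key : ∀ f : RR, ∃ a b : ℂ, f - C a - C b * X 0 ∈ I := by
    intro f
    induction f using MvPolynomial.induction_on with
    | C a => exact ⟨a, 0, by simp [I.zero_mem]⟩
    | add p q hp hq =>
      obtain ⟨a, b, hp⟩ := hp; obtain ⟨a', b', hq⟩ := hq
      exact ⟨a + a', b + b', by
        have := I.add_mem hp hq
        convert this using 1; push_cast [map_add]; ring⟩
    | mul_X p n hp =>
      obtain ⟨a, b, hp⟩ := hp
      fin_cases n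
      · refine ⟨b * ((c:ℂ))^2, a, ?_⟩
        have h1 : (X 0)^2 - C ((c:ℂ))^2 ∈ I := Ideal.subset_span (by simp)
        have := I.add_mem (I.mul_mem_left (X 0) hp) (I.mul_mem_left (C b) h1)
        convert this using 1; rw [map_mul, map_pow]
        simp only [Fin.zero_eta, Fin.mk_one, Fin.isValue]; ring
      · refine ⟨0, 0, ?_⟩
        have h2 : (X 1 : RR) ∈ I := Ideal.subset_span (by simp)
        simpa using I.mul_mem_left p h2
  obtain ⟨a, b, hf⟩ := key f
  have e1 : eval (vc c) (f - C a - C b * X 0) = 0 := eval_span_zero c c rfl _ hf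
  have e2 : eval (vc (-c)) (f - C a - C b * X 0) = 0 := eval_span_zero c (-c) (by ring) _ hf
  simp only [map_sub, map_mul, eval_C, eval_X, vc, Matrix.cons_val_zero] at e1 e2 h1 h2
  push_cast at e1 e2 h1 h2
  rw [h1] at e1
  rw [h2] at e2
  have hc' : (c : ℂ) ≠ 0 := by exact_mod_cast hc
  have hb : b = 0 := by
    have h2c : (2 : ℂ) * ((c:ℂ) * b) = 0 := by linear_combination e2 - e1
    rcases mul_eq_zero.mp h2c with h | h
    · norm_num at h
    · rcases mul_eq_zero.mp h with h' | h'
      · exact absurd h' hc'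
      · exact h'
  have ha : a = 0 := by rw [hb] at e1; linear_combination -e1
  subst hb ha
  simpa using hf

lemma cancelC {J : Ideal RR} {x : RR} {c : ℂ} (hc : c ≠ 0) (h : C c * x ∈ J) : x ∈ J := by
  have := J.mul_mem_left (C c⁻¹) h
  rwa [← mul_assoc, ← map_mul, inv_mul_cancel₀ hc, map_one, one_mul] at this

lemma endgame {J : Ideal RR} {t : RR} {c : ℝ} (hc : 0 < c) {w : Polynomial ℝ}
    (hw : Φ w * t ∈ J) (h2 : ((X 0)^2 - C ((c:ℂ))^2) * t ∈ J) (h3 : (X 1 : RR) * t ∈ J)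
    (e1 : w.eval c ≠ 0) (e2 : w.eval (-c) ≠ 0) : t ∈ J := by
  set c1 : ℂ := ((w.eval c : ℝ) : ℂ) with hc1
  set c2 : ℂ := ((w.eval (-c) : ℝ) : ℂ) with hc2
  have hc1' : c1 ≠ 0 := by simpa [hc1] using e1
  have hc2' : c2 ≠ 0 := by simpa [hc2] using e2
  have hcc : (c : ℂ) ≠ 0 := by exact_mod_cast (ne_of_gt hc)
  set k₀ : ℂ := (c1⁻¹ + c2⁻¹)/2 with hk0
  set k₁ : ℂ := (c1⁻¹ - c2⁻¹)/(2*(c:ℂ)) with hk1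
  set f : RR := (C k₀ + C k₁ * X 0) * Φ w - 1 with hf
  have hfm : f ∈ Ideal.span {(X 0)^2 - C ((c:ℂ))^2, (X 1 : RR)} := by
    apply mem_span_of_eval c (ne_of_gt hc)
    · simp only [hf, map_sub, map_add, map_mul, map_one, eval_C, eval_X, evalPhi]
      simp only [vc, Matrix.cons_val_zero]
      rw [← hc1]
      rw [hk0, hk1]
      field_simp
      ring
    · simp only [hf, map_sub, map_add, map_mul, map_one, eval_C, eval_X, evalPhi]
      simp only [vc, Matrix.cons_val_zero]
      rw [← hc2]
      push_cast
      rw [hk0, hk1]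
      field_simp
      ring
  obtain ⟨h₁, h₂, hrep⟩ := Ideal.mem_span_pair.mp hfm
  have hkey : t = (C k₀ + C k₁ * X 0) * (Φ w * t)
      - (h₁ * (((X 0)^2 - C ((c:ℂ))^2) * t) + h₂ * ((X 1 : RR) * t)) := by
    have h : h₁ * ((X 0)^2 - C ((c:ℂ))^2) + h₂ * (X 1 : RR)
        = (C k₀ + C k₁ * X 0) * Φ w - 1 := by rw [hrep]
    linear_combination t * h
  rw [hkey]
  exact J.sub_mem (J.mul_mem_left _ hw) (J.add_mem (J.mul_mem_left _ h2) (J.mul_mem_left _ h3))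

lemma mul_mem_span3 {J : Ideal RR} {a b c : RR} (r : RR)
    (ha : r * a ∈ J) (hb : r * b ∈ J) (hc : r * c ∈ J) :
    ∀ x ∈ Ideal.span {a, b, c}, r * x ∈ J := by
  intro x hx
  let K : Ideal RR := {
    carrier := {x | r * x ∈ J}
    add_mem' := fun hx hy => by simpa [mul_add] using J.add_mem hx hy
    zero_mem' := by simp [J.zero_mem]
    smul_mem' := fun u x hx => by
      simpa [smul_eq_mul, mul_left_comm] using J.mul_mem_left u hx }
  have hle : Ideal.span {a,b,c} ≤ K := by
    rw [Ideal.span_le]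
    rintro y (rfl | rfl | rfl) <;> assumption
  exact hle hx

def sg (j : ℕ) (p q : Polynomial ℝ) : Prop :=
  (∀ β : ℝ, 0 < β → 0 < (-1)^j * p.eval β ∧ 0 < (-1)^j * q.eval β) ∧
  (∀ β : ℝ, β < 0 → p.eval β < 0 ∧ 0 < q.eval β)

lemma Jm_mem1 (g : ℕ) : zm g ∈ Jm g := Ideal.subset_span (by simp)
lemma Jm_mem2 (g : ℕ) : zm (g+1) ∈ Jm g := Ideal.subset_span (by simp)
lemma Jm_mem3 (g : ℕ) : zm (g+2) ∈ Jm g := Ideal.subset_span (by simp)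

set_option maxHeartbeats 2000000 in
theorem key : ∀ m i j : ℕ, i + j = m → (X 1 : RR)^j * zm (2*i) ∈ Jm (2*m+1) := by
  intro m
  induction m with
  | zero =>
    intro i j hij
    obtain ⟨rfl, rfl⟩ : i = 0 ∧ j = 0 := by omega
    rw [pow_zero, one_mul, show 2*0 = 0 by ring, zm0]
    have g1 : zm 1 ∈ Jm 1 := Jm_mem1 1
    have g2 : zm 2 ∈ Jm 1 := by have := Jm_mem2 1; rwa [show 1+1 = 2 by ring] at this
    have h : (1 : RR) = (C (1/16) * X 0) * zm 1 - C (1/16) * zm 2 := by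
      rw [zm2, zm1]
      have h16 : (C ((1:ℂ)/16) : RR) * C 16 = 1 := by rw [← map_mul]; norm_num
      linear_combination (-1 : RR) * h16
    rw [h]
    exact Ideal.sub_mem _ (Ideal.mul_mem_left _ _ g1) (Ideal.mul_mem_left _ _ g2)
  | succ M IH =>
    set J := Jm (2*M+3) with hJdef
    have g1 : zm (2*M+3) ∈ J := Jm_mem1 _
    have g2 : zm (2*M+4) ∈ J := by
      have := Jm_mem2 (2*M+3); rwa [show 2*M+3+1 = 2*M+4 by ring] at this
    have g3 : zm (2*M+5) ∈ J := by
      have := Jm_mem3 (2*M+3); rwa [show 2*M+3+2 = 2*M+5 by ring] at this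
    have eNC : ∀ i : ℕ, ((eN i : ℕ) : ℂ) ≠ 0 :=
      fun i => Nat.cast_ne_zero.mpr (by have := eN_pos i; omega)
    have oNC : ∀ i : ℕ, ((oN i : ℕ) : ℂ) ≠ 0 :=
      fun i => Nat.cast_ne_zero.mpr (by have := oN_pos i; omega)
    have kNC : ∀ i : ℕ, ((kN i : ℕ) : ℂ) ≠ 0 :=
      fun i => Nat.cast_ne_zero.mpr (by have := kN_pos i; omega)
    -- even recurrence at top, normalized indices
    have EvM1 : zm (2*M+5) = X 0 * zm (2*M+4) + C ((eN (M+1) : ℂ)) * X 1 * zm (2*M+2) := by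
      have := zm_even (M+1)
      rwa [show 2*(M+1)+3 = 2*M+5 by ring, show 2*(M+1)+2 = 2*M+4 by ring,
        show 2*(M+1) = 2*M+2 by ring] at this
    -- γ ζ_{2m} ∈ J
    have F10 : X 1 * zm (2*M+2) ∈ J := by
      apply cancelC (eNC (M+1))
      have h : C ((eN (M+1) : ℂ)) * (X 1 * zm (2*M+2)) = zm (2*M+5) - X 0 * zm (2*M+4) := by
        linear_combination -EvM1
      rw [h]
      exact J.sub_mem g3 (J.mul_mem_left _ g2)
    -- γ² ζ_{2m-1} ∈ J
    have Gsq : X 1^2 * zm (2*M+1) ∈ J := by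
      apply cancelC (oNC M)
      have h : C ((oN M : ℂ)) * (X 1^2 * zm (2*M+1)) =
          X 1 * zm (2*M+4) - X 0 * (X 1 * zm (2*M+3)) + C ((kN M : ℂ)) * (X 1 * zm (2*M+2)) := by
        linear_combination (-(X 1 : RR)) * zm_odd M
      rw [h]
      exact J.add_mem (J.sub_mem (J.mul_mem_left _ g2)
        (J.mul_mem_left _ (J.mul_mem_left _ g1))) (J.mul_mem_left _ F10)
    -- transfer: γ²·J_{2m-1} ⊆ J
    have trans : ∀ x ∈ Jm (2*M+1), (X 1 : RR)^2 * x ∈ J := by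
      have hb : (X 1 : RR)^2 * zm (2*M+1+1) ∈ J := by
        rw [show 2*M+1+1 = 2*M+2 by ring,
          show (X 1 : RR)^2 * zm (2*M+2) = X 1 * (X 1 * zm (2*M+2)) by ring]
        exact J.mul_mem_left _ F10
      have hc : (X 1 : RR)^2 * zm (2*M+1+2) ∈ J := by
        rw [show 2*M+1+2 = 2*M+3 by ring]
        exact J.mul_mem_left _ g1
      exact mul_mem_span3 _ Gsq hb hc
    -- F1 : the D-family  γ^{j+1} ζ_{2i} ∈ J  for i+j = M+1
    have F1 : ∀ i j : ℕ, i + j = M + 1 → (X 1 : RR)^(j+1) * zm (2*i) ∈ J := by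
      intro i j hij
      cases j with
      | zero =>
        obtain rfl : i = M+1 := by omega
        rw [pow_one, show 2*(M+1) = 2*M+2 by ring]
        exact F10
      | succ j' =>
        have hIH : (X 1 : RR)^j' * zm (2*i) ∈ Jm (2*M+1) := IH i j' (by omega)
        have := trans _ hIH
        rwa [show (X 1 : RR)^2 * ((X 1:RR)^j' * zm (2*i)) = X 1^(j'+1+1) * zm (2*i) by ring] at this
    -- the inner elimination chain
    have Inv : ∀ j' i : ℕ, i + (j'+1) = M+1 → ∃ p q : Polynomial ℝ,
        (Φ p * ((X 1:RR)^(j'+1) * zm (2*i)) + Φ q * ((X 1:RR)^(j'+1) * zm (2*i+1)) ∈ J)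
        ∧ sg (j'+1) p q := by
      intro j'
      induction j' with
      | zero =>
        intro i hi
        have hiM : M = i := by omega
        subst hiM
        refine ⟨Polynomial.C (-((kN M * eN M : ℕ) : ℝ)),
          Polynomial.C (-((oN M : ℕ) : ℝ)) * Polynomial.X, ?_, ?_, ?_⟩
        · have s0mem : X 0 * zm (2*M+2) + C ((eN M:ℂ)) * (X 1 * zm (2*M)) ∈ J := by
            have h : X 0 * zm (2*M+2) + C ((eN M:ℂ)) * (X 1 * zm (2*M)) = zm (2*M+3) := by
              linear_combination -(zm_even M)
            rw [h]; exact g1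
          have O0mem : (X 0^2 - C ((kN M:ℂ))) * zm (2*M+2) + C ((eN M:ℂ)) * X 0 * (X 1 * zm (2*M))
              + C ((oN M:ℂ)) * (X 1 * zm (2*M+1)) ∈ J := by
            have h : (X 0^2 - C ((kN M:ℂ))) * zm (2*M+2) + C ((eN M:ℂ)) * X 0 * (X 1 * zm (2*M))
                + C ((oN M:ℂ)) * (X 1 * zm (2*M+1)) = zm (2*M+4) := by
              linear_combination (-1 : RR) * zm_odd M - X 0 * zm_even M
            rw [h]; exact g2
          have comb := J.sub_mem (J.mul_mem_left (X 0^2 - C ((kN M:ℂ))) s0mem)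
            (J.mul_mem_left (X 0) O0mem)
          have h : (X 0^2 - C ((kN M:ℂ))) * (X 0 * zm (2*M+2) + C ((eN M:ℂ)) * (X 1 * zm (2*M)))
              - X 0 * ((X 0^2 - C ((kN M:ℂ))) * zm (2*M+2) + C ((eN M:ℂ)) * X 0 * (X 1 * zm (2*M))
                + C ((oN M:ℂ)) * (X 1 * zm (2*M+1)))
              = Φ (Polynomial.C (-((kN M * eN M : ℕ) : ℝ))) * ((X 1:RR)^(0+1) * zm (2*M))
                + Φ (Polynomial.C (-((oN M : ℕ) : ℝ)) * Polynomial.X) * ((X 1:RR)^(0+1) * zm (2*M+1)) := by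
            simp only [map_mul, map_neg, Φ_C, Φ_X]
            push_cast
            simp only [C_mul, C_neg]
            ring
          rw [h] at comb
          exact comb
        · intro β hβ
          have heN : (0:ℝ) < ((eN M:ℕ):ℝ) := by exact_mod_cast eN_pos M
          have hkN : (0:ℝ) < ((kN M:ℕ):ℝ) := by exact_mod_cast kN_pos M
          have hoN : (0:ℝ) < ((oN M:ℕ):ℝ) := by exact_mod_cast oN_pos M
          constructor
          · simp only [Polynomial.eval_C, zero_add, pow_one]
            push_cast
            nlinarith [mul_pos hkN heN]
          · simp only [Polynomial.eval_mul, Polynomial.eval_C, Polynomial.eval_X, zero_add, pow_one]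
            nlinarith [mul_pos hoN hβ]
        · intro β hβ
          have heN : (0:ℝ) < ((eN M:ℕ):ℝ) := by exact_mod_cast eN_pos M
          have hkN : (0:ℝ) < ((kN M:ℕ):ℝ) := by exact_mod_cast kN_pos M
          have hoN : (0:ℝ) < ((oN M:ℕ):ℝ) := by exact_mod_cast oN_pos M
          constructor
          · simp only [Polynomial.eval_C]
            push_cast
            nlinarith [mul_pos hkN heN]
          · simp only [Polynomial.eval_mul, Polynomial.eval_C, Polynomial.eval_X]
            nlinarith [mul_pos hoN (neg_pos.mpr hβ)]
      | succ j' ih =>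
        intro i hi
        obtain ⟨p, q, hpq, hsg⟩ := ih (i+1) (by omega)
        rw [show 2*(i+1) = 2*i+2 by ring] at hpq
        rw [show 2*i+2+1 = 2*i+3 by ring] at hpq
        have Eid : (X 1:RR)^(j'+1) * zm (2*i+3) = X 0 * ((X 1:RR)^(j'+1) * zm (2*i+2))
            + C ((eN i:ℂ)) * ((X 1:RR)^(j'+1+1) * zm (2*i)) := by
          linear_combination ((X 1:RR)^(j'+1)) * zm_even i
        have Omem : X 0 * ((X 1:RR)^(j'+1) * zm (2*i+3)) - C ((kN i:ℂ)) * ((X 1:RR)^(j'+1) * zm (2*i+2))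
            + C ((oN i:ℂ)) * ((X 1:RR)^(j'+1+1) * zm (2*i+1)) ∈ J := by
          have hF := F1 (i+2) j' (by omega)
          have h : (X 1:RR)^(j'+1) * zm (2*(i+2)) =
              X 0 * ((X 1:RR)^(j'+1) * zm (2*i+3)) - C ((kN i:ℂ)) * ((X 1:RR)^(j'+1) * zm (2*i+2))
              + C ((oN i:ℂ)) * ((X 1:RR)^(j'+1+1) * zm (2*i+1)) := by
            rw [show 2*(i+2) = 2*i+4 by ring]
            linear_combination ((X 1:RR)^(j'+1)) * zm_odd i
          rw [h] at hF; exact hF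
        have i_mem : (Φ p + X 0 * Φ q) * ((X 1:RR)^(j'+1) * zm (2*i+2))
            + C ((eN i:ℂ)) * Φ q * ((X 1:RR)^(j'+1+1) * zm (2*i)) ∈ J := by
          have h : (Φ p + X 0 * Φ q) * ((X 1:RR)^(j'+1) * zm (2*i+2))
              + C ((eN i:ℂ)) * Φ q * ((X 1:RR)^(j'+1+1) * zm (2*i))
              = Φ p * ((X 1:RR)^(j'+1) * zm (2*i+2)) + Φ q * ((X 1:RR)^(j'+1) * zm (2*i+3)) := by
            rw [Eid]; ring
          rw [h]; exact hpq
        have comb := J.sub_mem (J.mul_mem_left (X 0^2 - C ((kN i:ℂ))) i_mem)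
          (J.mul_mem_left (Φ p + X 0 * Φ q) Omem)
        refine ⟨-(Polynomial.C ((eN i:ℕ):ℝ)) * (Polynomial.X * p + Polynomial.C ((kN i:ℕ):ℝ) * q),
          -(Polynomial.C ((oN i:ℕ):ℝ)) * (p + Polynomial.X * q), ?_, ?_, ?_⟩
        · have h : (X 0^2 - C ((kN i:ℂ))) * ((Φ p + X 0 * Φ q) * ((X 1:RR)^(j'+1) * zm (2*i+2))
                + C ((eN i:ℂ)) * Φ q * ((X 1:RR)^(j'+1+1) * zm (2*i)))
              - (Φ p + X 0 * Φ q) * (X 0 * ((X 1:RR)^(j'+1) * zm (2*i+3))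
                - C ((kN i:ℂ)) * ((X 1:RR)^(j'+1) * zm (2*i+2))
                + C ((oN i:ℂ)) * ((X 1:RR)^(j'+1+1) * zm (2*i+1)))
              = Φ (-(Polynomial.C ((eN i:ℕ):ℝ)) * (Polynomial.X * p + Polynomial.C ((kN i:ℕ):ℝ) * q))
                  * ((X 1:RR)^(j'+1+1) * zm (2*i))
                + Φ (-(Polynomial.C ((oN i:ℕ):ℝ)) * (p + Polynomial.X * q))
                  * ((X 1:RR)^(j'+1+1) * zm (2*i+1)) := by
            rw [Eid]
            simp only [map_mul, map_add, map_neg, Φ_C, Φ_X]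
            push_cast
            ring
          rw [h] at comb
          exact comb
        · intro β hβ
          obtain ⟨h1, h2⟩ := hsg.1 β hβ
          have heN : (0:ℝ) < ((eN i:ℕ):ℝ) := by exact_mod_cast eN_pos i
          have hkN : (0:ℝ) < ((kN i:ℕ):ℝ) := by exact_mod_cast kN_pos i
          have hoN : (0:ℝ) < ((oN i:ℕ):ℝ) := by exact_mod_cast oN_pos i
          simp only [Polynomial.eval_mul, Polynomial.eval_add, Polynomial.eval_neg,
            Polynomial.eval_C, Polynomial.eval_X]
          constructor
          · have key : (-1:ℝ)^(j'+1+1) * (-((eN i:ℕ):ℝ) * (β * p.eval β + ((kN i:ℕ):ℝ) * q.eval β))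
                = ((eN i:ℕ):ℝ) * (β * ((-1:ℝ)^(j'+1) * p.eval β)
                  + ((kN i:ℕ):ℝ) * ((-1:ℝ)^(j'+1) * q.eval β)) := by ring
            rw [key]
            exact mul_pos heN (add_pos (mul_pos hβ h1) (mul_pos hkN h2))
          · have key : (-1:ℝ)^(j'+1+1) * (-((oN i:ℕ):ℝ) * (p.eval β + β * q.eval β))
                = ((oN i:ℕ):ℝ) * (((-1:ℝ)^(j'+1) * p.eval β) + β * ((-1:ℝ)^(j'+1) * q.eval β)) := by
              ring
            rw [key]
            exact mul_pos hoN (add_pos h1 (mul_pos hβ h2))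
        · intro β hβ
          obtain ⟨h1, h2⟩ := hsg.2 β hβ
          have heN : (0:ℝ) < ((eN i:ℕ):ℝ) := by exact_mod_cast eN_pos i
          have hkN : (0:ℝ) < ((kN i:ℕ):ℝ) := by exact_mod_cast kN_pos i
          have hoN : (0:ℝ) < ((oN i:ℕ):ℝ) := by exact_mod_cast oN_pos i
          simp only [Polynomial.eval_mul, Polynomial.eval_add, Polynomial.eval_neg,
            Polynomial.eval_C, Polynomial.eval_X]
          constructor
          · nlinarith [mul_pos_of_neg_of_neg hβ h1, mul_pos hkN h2]
          · nlinarith [mul_pos (neg_pos.mpr hβ) h2]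
    -- bottom of the chain
    have bot : (X 1:RR)^(M+1) * zm 0 ∈ J := by
      obtain ⟨p, q, hpq, hsg⟩ := Inv M 0 (by omega)
      rw [show 2*0 = 0 by ring] at hpq
      rw [show (0:ℕ)+1 = 1 by ring] at hpq
      have hw : Φ (p + Polynomial.X * q) * ((X 1:RR)^(M+1) * zm 0) ∈ J := by
        have h : Φ (p + Polynomial.X * q) * ((X 1:RR)^(M+1) * zm 0)
            = Φ p * ((X 1:RR)^(M+1) * zm 0) + Φ q * ((X 1:RR)^(M+1) * zm 1) := by
          rw [zm0, zm1]; simp only [map_add, map_mul, Φ_X]; ring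
        rw [h]; exact hpq
      have h2 : ((X 0)^2 - (C (((4:ℝ):ℂ)) : RR)^2) * ((X 1:RR)^(M+1) * zm 0) ∈ J := by
        have hF := F1 1 M (by omega)
        rw [show 2*1 = 2 by norm_num] at hF
        have h : ((X 0)^2 - (C (((4:ℝ):ℂ)) : RR)^2) * ((X 1:RR)^(M+1) * zm 0)
            = (X 1:RR)^(M+1) * zm 2 := by
          rw [zm0, zm2, show ((C (((4:ℝ):ℂ)) : RR))^2 = (C 16 : RR) from by
            rw [← map_pow]; norm_num]
          ring
        rw [h]; exact hF
      have h3 : (X 1:RR) * ((X 1:RR)^(M+1) * zm 0) ∈ J := by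
        have hF := F1 0 (M+1) (by omega)
        rw [show 2*0 = 0 by ring] at hF
        rw [show (X 1:RR) * ((X 1:RR)^(M+1) * zm 0) = (X 1:RR)^(M+1+1) * zm 0 by ring]
        exact hF
      have e1 : (p + Polynomial.X*q).eval 4 ≠ 0 := by
        have h := hsg.1 4 (by norm_num)
        intro h0
        simp only [Polynomial.eval_add, Polynomial.eval_mul, Polynomial.eval_X] at h0
        have hx : (-1:ℝ)^(M+1) * p.eval 4 + 4*((-1:ℝ)^(M+1) * q.eval 4) = 0 := by
          linear_combination ((-1:ℝ)^(M+1)) * h0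
        nlinarith [h.1, h.2]
      have e2 : (p + Polynomial.X*q).eval (-4) ≠ 0 := by
        have h := hsg.2 (-4) (by norm_num)
        intro h0
        simp only [Polynomial.eval_add, Polynomial.eval_mul, Polynomial.eval_X] at h0
        nlinarith [h.1, h.2]
      exact endgame (by norm_num : (0:ℝ) < 4) hw h2 h3 e1 e2
    -- upward pass
    have Up : ∀ i j : ℕ, i + j = M + 1 → 1 ≤ j →
        ((X 1:RR)^j * zm (2*i) ∈ J ∧ (X 1:RR)^j * zm (2*i+1) ∈ J) := by
      intro i
      induction i with
      | zero =>
        intro j hj _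
        have hjM : j = M+1 := by omega
        subst hjM
        constructor
        · rw [show 2*0 = 0 by ring]; exact bot
        · rw [show 2*0+1 = 1 by norm_num,
            show (X 1:RR)^(M+1) * zm 1 = X 0 * ((X 1:RR)^(M+1) * zm 0) from by
              rw [zm0, zm1]; ring]
          exact J.mul_mem_left _ bot
      | succ i ihU =>
        intro j hj hj1
        obtain ⟨j'', rfl⟩ : ∃ j'', j = j''+1 := ⟨j-1, by omega⟩
        obtain ⟨ht1, hs1⟩ := ihU (j''+2) (by omega) (by omega)
        obtain ⟨p, q, hpq, hsg⟩ := Inv j'' (i+1) (by omega)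
        rw [show 2*(i+1) = 2*i+2 by ring] at hpq
        rw [show 2*i+2+1 = 2*i+3 by ring] at hpq
        have Eid : (X 1:RR)^(j''+1) * zm (2*i+3) = X 0 * ((X 1:RR)^(j''+1) * zm (2*i+2))
            + C ((eN i:ℂ)) * ((X 1:RR)^(j''+1+1) * zm (2*i)) := by
          linear_combination ((X 1:RR)^(j''+1)) * zm_even i
        have ht1' : (X 1:RR)^(j''+1+1) * zm (2*i) ∈ J := by
          rwa [show (j''+1+1) = j''+2 by ring]
        have hs1' : (X 1:RR)^(j''+1+1) * zm (2*i+1) ∈ J := by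
          rwa [show (j''+1+1) = j''+2 by ring]
        have hw : Φ (p + Polynomial.X * q) * ((X 1:RR)^(j''+1) * zm (2*i+2)) ∈ J := by
          have h : Φ (p + Polynomial.X * q) * ((X 1:RR)^(j''+1) * zm (2*i+2))
              = (Φ p * ((X 1:RR)^(j''+1) * zm (2*i+2)) + Φ q * ((X 1:RR)^(j''+1) * zm (2*i+3)))
                - C ((eN i:ℂ)) * Φ q * ((X 1:RR)^(j''+1+1) * zm (2*i)) := by
            rw [Eid]; simp only [map_add, map_mul, Φ_X]; ring
          rw [h]; exact J.sub_mem hpq (J.mul_mem_left _ ht1')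
        have Omem : X 0 * ((X 1:RR)^(j''+1) * zm (2*i+3)) - C ((kN i:ℂ)) * ((X 1:RR)^(j''+1) * zm (2*i+2))
            + C ((oN i:ℂ)) * ((X 1:RR)^(j''+1+1) * zm (2*i+1)) ∈ J := by
          have hF := F1 (i+2) j'' (by omega)
          have h : (X 1:RR)^(j''+1) * zm (2*(i+2)) =
              X 0 * ((X 1:RR)^(j''+1) * zm (2*i+3)) - C ((kN i:ℂ)) * ((X 1:RR)^(j''+1) * zm (2*i+2))
              + C ((oN i:ℂ)) * ((X 1:RR)^(j''+1+1) * zm (2*i+1)) := by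
            rw [show 2*(i+2) = 2*i+4 by ring]
            linear_combination ((X 1:RR)^(j''+1)) * zm_odd i
          rw [h] at hF; exact hF
        have hkc : ((C ((((4*(2*i+3):ℕ):ℝ)):ℂ) : RR))^2 = C ((kN i:ℂ)) := by
          rw [← map_pow]; congr 1; push_cast [kN]; ring
        have h2 : ((X 0)^2 - (C ((((4*(2*i+3):ℕ):ℝ)):ℂ) : RR)^2) * ((X 1:RR)^(j''+1) * zm (2*i+2)) ∈ J := by
          rw [hkc]
          have h : ((X 0)^2 - C ((kN i:ℂ))) * ((X 1:RR)^(j''+1) * zm (2*i+2))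
              = (X 0 * ((X 1:RR)^(j''+1) * zm (2*i+3)) - C ((kN i:ℂ)) * ((X 1:RR)^(j''+1) * zm (2*i+2))
                 + C ((oN i:ℂ)) * ((X 1:RR)^(j''+1+1) * zm (2*i+1)))
                - C ((oN i:ℂ)) * ((X 1:RR)^(j''+1+1) * zm (2*i+1))
                - C ((eN i:ℂ)) * X 0 * ((X 1:RR)^(j''+1+1) * zm (2*i)) := by
            rw [Eid]; ring
          rw [h]
          exact J.sub_mem (J.sub_mem Omem (J.mul_mem_left _ hs1')) (J.mul_mem_left _ ht1')
        have h3 : (X 1:RR) * ((X 1:RR)^(j''+1) * zm (2*i+2)) ∈ J := by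
          have hF := F1 (i+1) (j''+1) (by omega)
          rw [show 2*(i+1) = 2*i+2 by ring] at hF
          rw [show (X 1:RR) * ((X 1:RR)^(j''+1) * zm (2*i+2)) = (X 1:RR)^(j''+1+1) * zm (2*i+2) by ring]
          exact hF
        have hcpos : (0:ℝ) < ((4*(2*i+3):ℕ):ℝ) := by
          have h4 : (0:ℕ) < 4*(2*i+3) := by omega
          exact_mod_cast h4
        have e1 : (p + Polynomial.X*q).eval ((4*(2*i+3):ℕ):ℝ) ≠ 0 := by
          have h := hsg.1 _ hcpos
          intro h0
          simp only [Polynomial.eval_add, Polynomial.eval_mul, Polynomial.eval_X] at h0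
          have hx : (-1:ℝ)^(j''+1) * p.eval ((4*(2*i+3):ℕ):ℝ)
              + ((4*(2*i+3):ℕ):ℝ)*((-1:ℝ)^(j''+1) * q.eval ((4*(2*i+3):ℕ):ℝ)) = 0 := by
            linear_combination ((-1:ℝ)^(j''+1)) * h0
          nlinarith [h.1, h.2, mul_pos hcpos h.2]
        have e2 : (p + Polynomial.X*q).eval (-((4*(2*i+3):ℕ):ℝ)) ≠ 0 := by
          have h := hsg.2 (-((4*(2*i+3):ℕ):ℝ)) (by linarith)
          intro h0
          simp only [Polynomial.eval_add, Polynomial.eval_mul, Polynomial.eval_X] at h0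
          nlinarith [h.1, h.2, mul_pos hcpos h.2]
        have ht : (X 1:RR)^(j''+1) * zm (2*i+2) ∈ J := endgame hcpos hw h2 h3 e1 e2
        have hs : (X 1:RR)^(j''+1) * zm (2*i+3) ∈ J := by
          rw [Eid]
          exact J.add_mem (J.mul_mem_left _ ht) (J.mul_mem_left _ ht1')
        constructor
        · rw [show 2*(i+1) = 2*i+2 by ring]; exact ht
        · rw [show 2*(i+1)+1 = 2*i+3 by ring]; exact hs
    -- the crux
    have hs1J : (X 1:RR) * zm (2*M+1) ∈ J := by
      have h := (Up M 1 (by omega) (by omega)).2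
      rwa [pow_one] at h
    have crux : zm (2*M+2) ∈ J := by
      apply cancelC (kNC M)
      have h : C ((kN M:ℂ)) * zm (2*M+2) = X 0 * zm (2*M+3) - zm (2*M+4)
          + C ((oN M:ℂ)) * (X 1 * zm (2*M+1)) := by
        linear_combination zm_odd M
      rw [h]
      exact J.add_mem (J.sub_mem (J.mul_mem_left _ g1) g2) (J.mul_mem_left _ hs1J)
    -- assemble
    intro i j hij
    rw [show 2*(M+1)+1 = 2*M+3 by ring]
    cases j with
    | zero =>
      have hi : M+1 = i := by omega
      subst hi
      rw [pow_zero, one_mul, show 2*(M+1) = 2*M+2 by ring]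
      exact crux
    | succ j'' =>
      have hXJ : ∀ x ∈ Jm (2*M+1), (X 1:RR) * x ∈ J := by
        have hb : (X 1:RR) * zm (2*M+1+1) ∈ J := by
          rw [show 2*M+1+1 = 2*M+2 by ring]; exact F10
        have hcx : (X 1:RR) * zm (2*M+1+2) ∈ J := by
          rw [show 2*M+1+2 = 2*M+3 by ring]; exact J.mul_mem_left _ g1
        exact mul_mem_span3 _ hs1J hb hcx
      have hIH : (X 1:RR)^j'' * zm (2*i) ∈ Jm (2*M+1) := IH i j'' (by omega)
      have hfin := hXJ _ hIH
      rwa [show (X 1:RR) * ((X 1:RR)^j'' * zm (2*i)) = (X 1:RR)^(j''+1) * zm (2*i) by ring] at hfin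


/-- For g ≥ 1 odd, J_g^- = J_{g−1}^-; equivalently, ζ_{g−1}^- ∈ J_g^-. -/
theorem Jm_odd_eq_pred (g : ℕ) (hg : 1 ≤ g) (hodd : Odd g) :
    Jm g = Jm (g - 1) ∧ zm (g - 1) ∈ Jm g := by
  obtain ⟨m, rfl⟩ : ∃ m, g = 2*m+1 := by
    obtain ⟨k, hk⟩ := hodd; exact ⟨k, by omega⟩
  have hg1 : 2*m+1-1 = 2*m := by omega
  rw [hg1]
  have hcrux : zm (2*m) ∈ Jm (2*m+1) := by
    have h := key m m 0 (by omega)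
    rwa [pow_zero, one_mul] at h
  refine ⟨le_antisymm ?_ ?_, hcrux⟩
  · rw [Jm, Ideal.span_le]
    rintro x (rfl | rfl | rfl)
    · have := Jm_mem2 (2*m)
      rwa [SetLike.mem_coe, show 2*m+1 = 2*m+1 by ring]
    · have h := Jm_mem3 (2*m)
      rw [SetLike.mem_coe, show 2*m+1+1 = 2*m+2 by ring]
      rwa [show 2*m+2 = 2*m+2 by ring] at h
    · rw [SetLike.mem_coe, show 2*m+1+2 = 2*m+3 by ring]
      have hz := zm_even m
      rw [hz]
      exact Ideal.add_mem _
        (Ideal.mul_mem_left _ _ (by have := Jm_mem3 (2*m); rwa [show 2*m+2 = 2*m+2 by ring] at this))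
        (Ideal.mul_mem_left _ _ (Jm_mem1 (2*m)))
  · rw [show Jm (2*m) = Ideal.span {zm (2*m), zm (2*m+1), zm (2*m+2)} from by rw [Jm], Ideal.span_le]
    rintro x (rfl | rfl | rfl)
    · exact hcrux
    · exact Jm_mem1 (2*m+1)
    · have h := Jm_mem2 (2*m+1)
      rwa [SetLike.mem_coe, show 2*m+2 = 2*m+1+1 by ring]
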